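/- Let I, ≺, (T_i)_{i∈I} satisfy the hypotheses of the ordinal-norm theorem (each true theory T_i with j ≺ i implies ‖T_j‖ < ‖T_i‖). If the whole family is true (the intended model satisfies every T_i), then ≺ is well-founded; in particular there is no i with i ≺ i. -/

import Mathlib

open Nat.Partrec (Code)

/-- The `e`-th partial computable function. -/
def phi (e : ℕ) : ℕ →. ℕ := (Denumerable.ofNat Code e).eval

/-- The variant Kleene ordinal notation system, as the smallest relation between
notations `n : ℕ` and their ordinal values `|n|`:
`0` has value `0`; if `n` has value `o` then `2 ^ n` has value `o + 1`; and if
`φ_e` is total, with values `m k = φ_e k` that are all notations of values `g k`,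
then `3 * 5 ^ e` is a notation of value `sup_k |φ_e k| = ⨆ k, g k`. -/
inductive KO : ℕ → Ordinal → Prop
  | zero : KO 0 0
  | succ (n : ℕ) (o : Ordinal) : KO n o → KO (2 ^ n) (o + 1)
  | lim (e : ℕ) (m : ℕ → ℕ) (g : ℕ → Ordinal) :
      (∀ k : ℕ, m k ∈ phi e k) →
      (∀ k : ℕ, KO (m k) (g k)) →
      KO (3 * 5 ^ e) (⨆ k, g k)

/-- The `e`-th recursively enumerable subset of ℕ. -/
def WSet (e : ℕ) : Set ℕ := {x | (phi e x).Dom}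

lemma two_pow_ne_three_mul_five_pow (n e : ℕ) : 2 ^ n ≠ 3 * 5 ^ e := by
  intro h
  have h3 : 3 ∣ 2 ^ n := h ▸ Dvd.intro _ rfl
  have := Nat.Prime.dvd_of_dvd_pow (p := 3) (by norm_num) h3
  omega

/-- `KO` is single-valued (auxiliary form). -/
theorem KO_func_aux {m : ℕ} {o : Ordinal} (h : KO m o) :
    ∀ {m' : ℕ} {o' : Ordinal}, KO m' o' → m = m' → o = o' := by
  induction h with
  | zero =>
    intro m' o' h' hm
    cases h' with
    | zero => rfl
    | succ n o hn => exact absurd hm.symm (by positivity)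
    | lim e m g hmem hg => exact absurd hm.symm (by positivity)
  | succ n o hn ih =>
    intro m' o' h' hm
    cases h' with
    | zero => exact absurd hm (by positivity)
    | succ n' o'' hn' =>
      have : n = n' := Nat.pow_right_injective (le_refl 2) hm
      rw [ih hn' this]
    | lim e mm g hmem hg => exact absurd hm (two_pow_ne_three_mul_five_pow n e)
  | lim e m g hmem hg ih =>
    intro m' o' h' hm
    cases h' with
    | zero => exact absurd hm (by positivity)
    | succ n' o'' hn' => exact absurd hm.symm (two_pow_ne_three_mul_five_pow n' e)
    | lim e' mm' g' hmem' hg' =>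
      have he : e = e' := by
        have h5 : (5:ℕ) ^ e = 5 ^ e' := by omega
        exact Nat.pow_right_injective (by norm_num) h5
      subst he
      have : ∀ k, g k = g' k := fun k =>
        ih k (hg' k) (Part.mem_unique (hmem k) (hmem' k))
      rw [funext this]

/-- `KO` is single-valued. -/
theorem KO_func {m : ℕ} {o o' : Ordinal} (h : KO m o) (h' : KO m o') : o = o' :=
  KO_func_aux h h' rfl

open Nat.Partrec.Code in
/-- Every nonempty r.e. set is the range of a total computable function. -/
theorem exists_total_enum {n a : ℕ} (ha : a ∈ WSet n) :
    ∃ (k : ℕ) (f : ℕ → ℕ), (∀ x, phi k x = Part.some (f x)) ∧ Set.range f = WSet n := by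
  classical
  set c : Code := Denumerable.ofNat Code n with hc
  set f : ℕ → ℕ := fun p =>
    ((evaln p.unpair.1 c p.unpair.2).map (fun _ => p.unpair.2)).getD a with hf
  have hprim : Primrec f := by
    have h1 : Primrec fun p : ℕ => p.unpair.1 := Primrec.fst.comp Primrec.unpair
    have h2 : Primrec fun p : ℕ => p.unpair.2 := Primrec.snd.comp Primrec.unpair
    have hev : Primrec fun p : ℕ => evaln p.unpair.1 c p.unpair.2 :=
      primrec_evaln.comp (((h1.pair (Primrec.const c)).pair h2))
    exact Primrec.option_getD.comp
      (Primrec.option_map hev (h2.comp Primrec.fst).to₂) (Primrec.const a)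
  have hpart : Nat.Partrec (fun x => Part.some (f x) : ℕ →. ℕ) :=
    Partrec.nat_iff.mp hprim.to_comp.partrec
  obtain ⟨c', hc'⟩ := exists_code.mp hpart
  refine ⟨Encodable.encode c', f, ?_, ?_⟩
  · intro x
    show (Denumerable.ofNat Code (Encodable.encode c')).eval x = _
    rw [Denumerable.ofNat_encode, hc']
  · ext m
    constructor
    · rintro ⟨p, rfl⟩
      show (phi n (f p)).Dom
      simp only [hf]
      rcases h : evaln p.unpair.1 c p.unpair.2 with _ | y
      · simpa [h] using (show (phi n a).Dom from ha)
      · simp only [h, Option.map_some, Option.getD_some]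
        have := evaln_sound (h ▸ Option.mem_def.mpr rfl : y ∈ evaln p.unpair.1 c p.unpair.2)
        exact this.fst
    · intro hm
      have : (c.eval m).Dom := hm
      obtain ⟨y, hy⟩ := Part.dom_iff_mem.mp this
      obtain ⟨t, ht⟩ := evaln_complete.mp hy
      refine ⟨Nat.pair t m, ?_⟩
      simp only [hf, Nat.unpair_pair]
      rcases h : evaln t c m with _ | y'
      · rw [h] at ht; exact absurd ht (by simp)
      · simp

open Classical in
/-- The (unique) ordinal value of a notation, or `0` if it is not a notation. -/
noncomputable def koVal (m : ℕ) : Ordinal :=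
  if h : ∃ o : Ordinal, KO m o then h.choose else 0

theorem koVal_spec.{u} {m : ℕ} (h : ∃ o : Ordinal.{u}, KO m o) : KO m (koVal.{u} m) := by
  unfold koVal
  split
  · exact Exists.choose_spec ‹_›
  · exact absurd h ‹_›

theorem koVal_eq {m : ℕ} {o : Ordinal} (h : KO m o) : koVal m = o :=
  KO_func (koVal_spec ⟨o, h⟩) h

/-- The norm of a theory presented by its set of proven notations. -/
noncomputable def koNorm {I : Type*} (P : I → Set ℕ) (i : I) : Ordinal :=
  ⨆ m : P i, koVal (m : ℕ) + 1

/-- Well-foundedness of true self-referential theories.  With the hypotheses of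
the ordinal-norm theorem holding for every pair `j ≺ i` (each theory, presented
by `P k = {m : T_k ⊨ O(m̄)}`, proves `O(0)` and the successor axioms; for
`j ≺ i`, `P j` is some `W_n`, `P j ⊆ 𝒪`, and `T_i` proves the limit axiom for
any total computable enumeration with range in `P j`; and by truth of the whole
family `P k ⊆ 𝒪` for every `k`), the relation `≺` is well-founded: there is no
infinite descending sequence; in particular no `i` satisfies `i ≺ i`. -/
theorem prec_wellFounded_of_true_aux.{w1, w2} {I : Type*} (prec : I → I → Prop)
    (P : I → Set ℕ)
    (h0 : ∀ k : I, 0 ∈ P k)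
    (h1 : ∀ (k : I) (m : ℕ), m ∈ P k → 2 ^ m ∈ P k)
    (hre : ∀ i j : I, prec j i → ∃ n : ℕ, P j = WSet n)
    (hsound : ∀ i j : I, prec j i → P j ⊆ {m : ℕ | ∃ o : Ordinal.{w1}, KO m o})
    (hlim : ∀ i j : I, prec j i → ∀ k : ℕ, (∀ x : ℕ, (phi k x).Dom) →
      (∀ x y : ℕ, y ∈ phi k x → y ∈ P j) → 3 * 5 ^ k ∈ P i)
    (htrue : ∀ k : I, P k ⊆ {m : ℕ | ∃ o : Ordinal.{w2}, KO m o}) :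
    (¬ ∃ g : ℕ → I, ∀ k : ℕ, prec (g (k + 1)) (g k)) ∧
      ∀ i : I, ¬ prec i i := by
  -- The key step: the norm strictly increases along `prec`.
  have key : ∀ i j : I, prec j i → koNorm.{_, w2} P j < koNorm.{_, w2} P i := by
    intro i j hij
    obtain ⟨n, hn⟩ := hre i j hij
    have ha : (0 : ℕ) ∈ WSet n := hn ▸ h0 j
    obtain ⟨k, f, hk, hrange⟩ := exists_total_enum ha
    have hfP : ∀ x : ℕ, f x ∈ P j := by
      intro x
      rw [hn, ← hrange]; exact ⟨x, rfl⟩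
    have htot : ∀ x : ℕ, (phi k x).Dom := fun x => by rw [hk]; trivial
    have hmem : ∀ x y : ℕ, y ∈ phi k x → y ∈ P j := by
      intro x y hy
      rw [hk] at hy
      rw [Part.mem_some_iff.mp hy]; exact hfP x
    have h35 : 3 * 5 ^ k ∈ P i := hlim i j hij k htot hmem
    -- the value of the limit notation
    have hKOlim : KO (3 * 5 ^ k) (⨆ x : ℕ, koVal (f x)) :=
      KO.lim k f (fun x => koVal (f x))
        (fun x => by rw [hk]; exact Part.mem_some _)
        (fun x => koVal_spec (htrue j (hfP x)))
    set s : Ordinal := ⨆ x : ℕ, koVal (f x) with hs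
    have hval35 : koVal (3 * 5 ^ k) = s := koVal_eq hKOlim
    -- `koNorm P j ≤ s`
    have hle : koNorm P j ≤ s := by
      have : Nonempty (P j) := ⟨⟨0, h0 j⟩⟩
      refine ciSup_le fun ⟨m, hm⟩ => ?_
      have h2m : 2 ^ m ∈ P j := h1 j m hm
      have hKOm : KO m (koVal m) := koVal_spec (htrue j hm)
      have hKO2m : KO (2 ^ m) (koVal m + 1) := KO.succ m (koVal m) hKOm
      obtain ⟨p, hp⟩ : 2 ^ m ∈ Set.range f := by rw [hrange, ← hn]; exact h2m
      calc koVal m + 1 = koVal (f p) := by rw [hp, koVal_eq hKO2m]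
        _ ≤ s := le_ciSup (Ordinal.bddAbove_range _) p
    -- `s < koNorm P i`
    have hlt : s < koNorm P i := by
      have : s < koVal (3 * 5 ^ k) + 1 := by
        rw [hval35, Ordinal.add_one_eq_succ]; exact Order.lt_succ s
      exact this.trans_le (le_ciSup (Ordinal.bddAbove_range _) (⟨3 * 5 ^ k, h35⟩ : P i))
    exact hle.trans_lt hlt
  constructor
  · rintro ⟨g, hg⟩
    have hdesc : ∀ m : ℕ, koNorm P (g (m + 1)) < koNorm P (g m) :=
      fun m => key (g m) (g (m + 1)) (hg m)
    exact (RelEmbedding.natGT (fun m => koNorm P (g m)) hdesc).not_wellFounded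
      Ordinal.lt_wf
  · intro i hi
    exact lt_irrefl _ (key i i hi)

/-- Well-foundedness of true self-referential theories. -/
theorem prec_wellFounded_of_true {I : Type*} (prec : I → I → Prop)
    (P : I → Set ℕ)
    (h0 : ∀ k : I, 0 ∈ P k)
    (h1 : ∀ (k : I) (m : ℕ), m ∈ P k → 2 ^ m ∈ P k)
    (hre : ∀ i j : I, prec j i → ∃ n : ℕ, P j = WSet n)
    (hsound : ∀ i j : I, prec j i → P j ⊆ {m : ℕ | ∃ o : Ordinal, KO m o})
    (hlim : ∀ i j : I, prec j i → ∀ k : ℕ, (∀ x : ℕ, (phi k x).Dom) →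
      (∀ x y : ℕ, y ∈ phi k x → y ∈ P j) → 3 * 5 ^ k ∈ P i)
    (htrue : ∀ k : I, P k ⊆ {m : ℕ | ∃ o : Ordinal, KO m o}) :
    (¬ ∃ g : ℕ → I, ∀ k : ℕ, prec (g (k + 1)) (g k)) ∧
      ∀ i : I, ¬ prec i i :=
  prec_wellFounded_of_true_aux prec P h0 h1 hre hsound hlim htrue
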